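/- arXiv:2303.09365 — 2 statements merged into one kernel-verified Lean document; each statement's English description precedes it below -/
import Mathlib

section
/- For every integer k ≥ 8, there exists a graph G that is (k−1)-colorable, can be obtained from a bipartite graph by adding ℓ edges for some ℓ < C(k,2) (binomial coefficient k choose 2), and satisfies Kc(G, k) ≥ 2. (This refutes the Higashitani–Matsumoto conjecture for all k ≥ 8.) -/
open SimpleGraph

/-- The spanning subgraph of `G` consisting of the edges both of whose endpoints
receive color `i` or color `j` under `φ`. -/
def kempeSubgraph {V : Type*} (G : SimpleGraph V) {k : ℕ} (φ : V → Fin k) (i j : Fin k) :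
    SimpleGraph V where
  Adj u v := G.Adj u v ∧ (φ u = i ∨ φ u = j) ∧ (φ v = i ∨ φ v = j)
  symm := ⟨fun u v ⟨h, hu, hv⟩ => ⟨h.symm, hv, hu⟩⟩
  loopless := ⟨fun v h => G.loopless.irrefl v h.1⟩

/-- `ψ` is obtained from `φ` by a single `i,j`-Kempe swap:  the colors `i` and `j` are
interchanged on the connected component (of the subgraph induced by colors `i,j`)
containing `w`, and nothing else changes. -/
def IsKempeSwap {V : Type*} (G : SimpleGraph V) {k : ℕ}
    (φ ψ : G.Coloring (Fin k)) : Prop :=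
  ∃ (i j : Fin k) (w : V), ∀ v : V,
    ((kempeSubgraph G (fun x => φ x) i j).Reachable w v → ψ v = Equiv.swap i j (φ v)) ∧
    (¬ (kempeSubgraph G (fun x => φ x) i j).Reachable w v → ψ v = φ v)

/-- Kempe `k`-equivalence of proper `k`-colorings:  one can be transformed into the
other by a sequence of Kempe swaps. -/
def KempeEquiv {V : Type*} (G : SimpleGraph V) (k : ℕ)
    (φ ψ : G.Coloring (Fin k)) : Prop :=
  Relation.EqvGen (IsKempeSwap G) φ ψ

/-- `Kc G k` is the number of Kempe equivalence classes of proper `k`-colorings of `G`. -/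
noncomputable def Kc {V : Type*} (G : SimpleGraph V) (k : ℕ) : ℕ :=
  Nat.card (Quot (KempeEquiv G k))

/-- `G` can be obtained from a bipartite graph by adding `ℓ` edges. -/
def BipartitePlus {V : Type*} (G : SimpleGraph V) (ℓ : ℕ) : Prop :=
  ∃ E : Finset (Sym2 V), E.card = ℓ ∧ ↑E ⊆ G.edgeSet ∧
    (G.deleteEdges ↑E).Colorable 2


namespace KCex

/-- class of a gadget vertex -/
def classN (a : ℕ) : ℕ := min (a / 2) 3

/-- a proper 3-coloring of the gadget -/
def c3N (a : ℕ) : ℕ :=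
  if a = 0 then 0 else if a = 1 then 1 else if a = 2 then 0 else if a = 3 then 2
  else if a = 4 then 1 else if a = 5 then 2 else if a = 6 then 0 else if a = 7 then 1 else 2

/-- adjacency on ℕ values: vertices < 9 form the gadget, others a clique joined to it -/
def gadN (a b : ℕ) : Prop :=
  a ≠ b ∧ (a < 9 → b < 9 → classN a ≠ classN b ∧ c3N a ≠ c3N b)

instance (a b : ℕ) : Decidable (gadN a b) := by unfold gadN; infer_instance

lemma gadN_symm {a b : ℕ} (h : gadN a b) : gadN b a :=
  ⟨h.1.symm, fun hb ha => ⟨(h.2 ha hb).1.symm, (h.2 ha hb).2.symm⟩⟩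

def Gk (m : ℕ) : SimpleGraph (Fin (m + 13)) where
  Adj u v := gadN u.val v.val
  symm := ⟨fun _ _ h => gadN_symm h⟩
  loopless := ⟨fun _ h => h.1 rfl⟩

instance (m : ℕ) : DecidableRel (Gk m).Adj := fun u v =>
  inferInstanceAs (Decidable (gadN u.val v.val))

lemma classN_lt (a : ℕ) : classN a < 4 := by unfold classN; omega

lemma c3N_lt (a : ℕ) : c3N a < 3 := by unfold c3N; split_ifs <;> omega

/-- the `k`-coloring with two classes per... : gadget vertex `a` gets `classN a`,
clique vertex `a` gets `a - 5`. -/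
def phiF (m : ℕ) (u : Fin (m + 13)) : Fin (m + 8) :=
  if u.val < 9 then ⟨classN u.val, by have := classN_lt u.val; omega⟩
  else ⟨u.val - 5, by omega⟩

lemma phiF_val (m : ℕ) (u : Fin (m + 13)) :
    (phiF m u).val = if u.val < 9 then classN u.val else u.val - 5 := by
  unfold phiF; split <;> rfl

lemma phiF_proper (m : ℕ) : ∀ {u v}, (Gk m).Adj u v → phiF m u ≠ phiF m v := by
  intro u v h hc
  have hc' := congrArg Fin.val hc
  rw [phiF_val, phiF_val] at hc'
  have h1 := h.1
  rcases h with ⟨hne, himp⟩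
  by_cases hu : u.val < 9 <;> by_cases hv : v.val < 9
  · have := (himp hu hv).1
    simp [hu, hv] at hc'; exact this hc'
  · have := classN_lt u.val; simp [hu, hv] at hc'; omega
  · have := classN_lt v.val; simp [hu, hv] at hc'; omega
  · simp [hu, hv] at hc'; omega

def phi (m : ℕ) : (Gk m).Coloring (Fin (m + 8)) :=
  SimpleGraph.Coloring.mk (phiF m) (phiF_proper m)

/-- the `(k-1)`-coloring: c3N on the gadget, `a - 6` on the clique -/
def psiF (m : ℕ) (u : Fin (m + 13)) : Fin (m + 7) :=
  if u.val < 9 then ⟨c3N u.val, by have := c3N_lt u.val; omega⟩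
  else ⟨u.val - 6, by omega⟩

lemma psiF_proper (m : ℕ) : ∀ {u v}, (Gk m).Adj u v → psiF m u ≠ psiF m v := by
  intro u v h hc
  have hc' := congrArg Fin.val hc
  unfold psiF at hc'
  rcases h with ⟨hne, himp⟩
  by_cases hu : u.val < 9 <;> by_cases hv : v.val < 9
  · have := (himp hu hv).2
    simp [hu, hv] at hc'; exact this hc'
  · have := c3N_lt u.val; simp [hu, hv] at hc'; omega
  · have := c3N_lt v.val; simp [hu, hv] at hc'; omega
  · simp [hu, hv] at hc'; omega

def psi (m : ℕ) : (Gk m).Coloring (Fin (m + 7)) :=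
  SimpleGraph.Coloring.mk (psiF m) (psiF_proper m)

/-- the second `k`-coloring, not using color `m+7` -/
def psiF' (m : ℕ) (u : Fin (m + 13)) : Fin (m + 8) :=
  if u.val < 9 then ⟨c3N u.val, by have := c3N_lt u.val; omega⟩
  else ⟨u.val - 6, by omega⟩

lemma psiF'_proper (m : ℕ) : ∀ {u v}, (Gk m).Adj u v → psiF' m u ≠ psiF' m v := by
  intro u v h hc
  have hc' := congrArg Fin.val hc
  unfold psiF' at hc'
  rcases h with ⟨hne, himp⟩
  by_cases hu : u.val < 9 <;> by_cases hv : v.val < 9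
  · have := (himp hu hv).2
    simp [hu, hv] at hc'; exact this hc'
  · have := c3N_lt u.val; simp [hu, hv] at hc'; omega
  · have := c3N_lt v.val; simp [hu, hv] at hc'; omega
  · simp [hu, hv] at hc'; omega

def psi' (m : ℕ) : (Gk m).Coloring (Fin (m + 8)) :=
  SimpleGraph.Coloring.mk (psiF' m) (psiF'_proper m)

lemma psiF'_val_lt (m : ℕ) (u : Fin (m + 13)) : (psiF' m u).val < m + 7 := by
  unfold psiF'; split
  · have := c3N_lt u.val; simp; omega
  · simp; omega

lemma phiF_surj (m : ℕ) : Function.Surjective (phiF m) := by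
  intro c
  by_cases hc : c.val < 4
  · refine ⟨⟨2 * c.val, by omega⟩, ?_⟩
    apply Fin.ext
    rw [phiF_val]
    simp only [show 2 * c.val < 9 by omega, if_true]
    unfold classN; omega
  · refine ⟨⟨c.val + 5, by omega⟩, ?_⟩
    apply Fin.ext
    rw [phiF_val]
    simp only [show ¬ (c.val + 5 < 9) by omega, if_false]
    omega


/-! ### Kempe subgraph generalities -/

lemma kempe_comm {V : Type*} (G : SimpleGraph V) {k : ℕ} (f : V → Fin k) (i j : Fin k) :
    kempeSubgraph G f i j = kempeSubgraph G f j i := by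
  ext u v
  show _ ∧ _ ∧ _ ↔ _ ∧ _ ∧ _
  tauto

lemma walk_colors {V : Type*} {G : SimpleGraph V} {k : ℕ} {f : V → Fin k} {i j : Fin k}
    {w v : V} (p : (kempeSubgraph G f i j).Walk w v) (hw : f w = i ∨ f w = j) :
    f v = i ∨ f v = j := by
  induction p with
  | nil => exact hw
  | cons h _ ih => exact ih h.2.2

/-! ### vertices and adjacency helpers -/

def gv (m : ℕ) (a : ℕ) (h : a < 9) : Fin (m + 13) := ⟨a, by omega⟩

lemma phig (m : ℕ) (a : ℕ) (h : a < 9) : (phiF m (gv m a h)).val = classN a := by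
  rw [phiF_val]; simp [gv, h]

lemma kadjg (m : ℕ) (i j : Fin (m + 8)) (a b : ℕ) (ha : a < 9) (hb : b < 9)
    (hadj : gadN a b)
    (hma : classN a = i.val ∨ classN a = j.val)
    (hmb : classN b = i.val ∨ classN b = j.val) :
    (kempeSubgraph (Gk m) (phiF m) i j).Adj (gv m a ha) (gv m b hb) :=
  ⟨hadj,
   hma.imp (fun h => Fin.ext ((phig m a ha).trans h)) (fun h => Fin.ext ((phig m a ha).trans h)),
   hmb.imp (fun h => Fin.ext ((phig m b hb).trans h)) (fun h => Fin.ext ((phig m b hb).trans h))⟩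

section PairLemmas

variable {m : ℕ} {i j : Fin (m + 8)}

/-- pair (0,1): root 3 -/
lemma reach01 (hi : i.val = 0) (hj : j.val = 1) (u : Fin (m + 13)) (h9 : u.val < 9)
    (hc : classN u.val = i.val ∨ classN u.val = j.val) :
    (kempeSubgraph (Gk m) (phiF m) i j).Reachable u (gv m 3 (by decide)) := by
  have A : ∀ a b (ha : a < 9) (hb : b < 9), gadN a b → (classN a = 0 ∨ classN a = 1) →
      (classN b = 0 ∨ classN b = 1) →
      (kempeSubgraph (Gk m) (phiF m) i j).Adj (gv m a ha) (gv m b hb) :=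
    fun a b ha hb h1 h2 h3 =>
      kadjg m i j a b ha hb h1 (by rw [hi, hj]; exact h2) (by rw [hi, hj]; exact h3)
  rw [hi, hj] at hc
  have h4 : u.val = 0 ∨ u.val = 1 ∨ u.val = 2 ∨ u.val = 3 := by unfold classN at hc; omega
  rcases h4 with h|h|h|h
  · obtain rfl : u = gv m 0 (by decide) := Fin.ext h
    exact (A 0 3 (by decide) (by decide) (by decide) (by decide) (by decide)).reachable
  · obtain rfl : u = gv m 1 (by decide) := Fin.ext h
    exact (A 1 3 (by decide) (by decide) (by decide) (by decide) (by decide)).reachable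
  · obtain rfl : u = gv m 2 (by decide) := Fin.ext h
    exact ((A 2 1 (by decide) (by decide) (by decide) (by decide) (by decide)).reachable).trans
      (A 1 3 (by decide) (by decide) (by decide) (by decide) (by decide)).reachable
  · obtain rfl : u = gv m 3 (by decide) := Fin.ext h
    exact Reachable.refl _

/-- pair (0,2): root 0 -/
lemma reach02 (hi : i.val = 0) (hj : j.val = 2) (u : Fin (m + 13)) (h9 : u.val < 9)
    (hc : classN u.val = i.val ∨ classN u.val = j.val) :
    (kempeSubgraph (Gk m) (phiF m) i j).Reachable u (gv m 0 (by decide)) := by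
  have A : ∀ a b (ha : a < 9) (hb : b < 9), gadN a b → (classN a = 0 ∨ classN a = 2) →
      (classN b = 0 ∨ classN b = 2) →
      (kempeSubgraph (Gk m) (phiF m) i j).Adj (gv m a ha) (gv m b hb) :=
    fun a b ha hb h1 h2 h3 =>
      kadjg m i j a b ha hb h1 (by rw [hi, hj]; exact h2) (by rw [hi, hj]; exact h3)
  rw [hi, hj] at hc
  have h4 : u.val = 0 ∨ u.val = 1 ∨ u.val = 4 ∨ u.val = 5 := by unfold classN at hc; omega
  rcases h4 with h|h|h|h
  · obtain rfl : u = gv m 0 (by decide) := Fin.ext h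
    exact Reachable.refl _
  · obtain rfl : u = gv m 1 (by decide) := Fin.ext h
    exact ((A 1 5 (by decide) (by decide) (by decide) (by decide) (by decide)).reachable).trans (A 5 0 (by decide) (by decide) (by decide) (by decide) (by decide)).reachable
  · obtain rfl : u = gv m 4 (by decide) := Fin.ext h
    exact (A 4 0 (by decide) (by decide) (by decide) (by decide) (by decide)).reachable
  · obtain rfl : u = gv m 5 (by decide) := Fin.ext h
    exact (A 5 0 (by decide) (by decide) (by decide) (by decide) (by decide)).reachable

/-- pair (0,3): root 8 -/
lemma reach03 (hi : i.val = 0) (hj : j.val = 3) (u : Fin (m + 13)) (h9 : u.val < 9)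
    (hc : classN u.val = i.val ∨ classN u.val = j.val) :
    (kempeSubgraph (Gk m) (phiF m) i j).Reachable u (gv m 8 (by decide)) := by
  have A : ∀ a b (ha : a < 9) (hb : b < 9), gadN a b → (classN a = 0 ∨ classN a = 3) →
      (classN b = 0 ∨ classN b = 3) →
      (kempeSubgraph (Gk m) (phiF m) i j).Adj (gv m a ha) (gv m b hb) :=
    fun a b ha hb h1 h2 h3 =>
      kadjg m i j a b ha hb h1 (by rw [hi, hj]; exact h2) (by rw [hi, hj]; exact h3)
  rw [hi, hj] at hc
  have h4 : u.val = 0 ∨ u.val = 1 ∨ u.val = 6 ∨ u.val = 7 ∨ u.val = 8 := by unfold classN at hc; omega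
  rcases h4 with h|h|h|h|h
  · obtain rfl : u = gv m 0 (by decide) := Fin.ext h
    exact (A 0 8 (by decide) (by decide) (by decide) (by decide) (by decide)).reachable
  · obtain rfl : u = gv m 1 (by decide) := Fin.ext h
    exact (A 1 8 (by decide) (by decide) (by decide) (by decide) (by decide)).reachable
  · obtain rfl : u = gv m 6 (by decide) := Fin.ext h
    exact ((A 6 1 (by decide) (by decide) (by decide) (by decide) (by decide)).reachable).trans (A 1 8 (by decide) (by decide) (by decide) (by decide) (by decide)).reachable
  · obtain rfl : u = gv m 7 (by decide) := Fin.ext h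
    exact ((A 7 0 (by decide) (by decide) (by decide) (by decide) (by decide)).reachable).trans (A 0 8 (by decide) (by decide) (by decide) (by decide) (by decide)).reachable
  · obtain rfl : u = gv m 8 (by decide) := Fin.ext h
    exact Reachable.refl _

/-- pair (1,2): root 2 -/
lemma reach12 (hi : i.val = 1) (hj : j.val = 2) (u : Fin (m + 13)) (h9 : u.val < 9)
    (hc : classN u.val = i.val ∨ classN u.val = j.val) :
    (kempeSubgraph (Gk m) (phiF m) i j).Reachable u (gv m 2 (by decide)) := by
  have A : ∀ a b (ha : a < 9) (hb : b < 9), gadN a b → (classN a = 1 ∨ classN a = 2) →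
      (classN b = 1 ∨ classN b = 2) →
      (kempeSubgraph (Gk m) (phiF m) i j).Adj (gv m a ha) (gv m b hb) :=
    fun a b ha hb h1 h2 h3 =>
      kadjg m i j a b ha hb h1 (by rw [hi, hj]; exact h2) (by rw [hi, hj]; exact h3)
  rw [hi, hj] at hc
  have h4 : u.val = 2 ∨ u.val = 3 ∨ u.val = 4 ∨ u.val = 5 := by unfold classN at hc; omega
  rcases h4 with h|h|h|h
  · obtain rfl : u = gv m 2 (by decide) := Fin.ext h
    exact Reachable.refl _
  · obtain rfl : u = gv m 3 (by decide) := Fin.ext h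
    exact ((A 3 4 (by decide) (by decide) (by decide) (by decide) (by decide)).reachable).trans (A 4 2 (by decide) (by decide) (by decide) (by decide) (by decide)).reachable
  · obtain rfl : u = gv m 4 (by decide) := Fin.ext h
    exact (A 4 2 (by decide) (by decide) (by decide) (by decide) (by decide)).reachable
  · obtain rfl : u = gv m 5 (by decide) := Fin.ext h
    exact (A 5 2 (by decide) (by decide) (by decide) (by decide) (by decide)).reachable

/-- pair (1,3): root 2 -/
lemma reach13 (hi : i.val = 1) (hj : j.val = 3) (u : Fin (m + 13)) (h9 : u.val < 9)
    (hc : classN u.val = i.val ∨ classN u.val = j.val) :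
    (kempeSubgraph (Gk m) (phiF m) i j).Reachable u (gv m 2 (by decide)) := by
  have A : ∀ a b (ha : a < 9) (hb : b < 9), gadN a b → (classN a = 1 ∨ classN a = 3) →
      (classN b = 1 ∨ classN b = 3) →
      (kempeSubgraph (Gk m) (phiF m) i j).Adj (gv m a ha) (gv m b hb) :=
    fun a b ha hb h1 h2 h3 =>
      kadjg m i j a b ha hb h1 (by rw [hi, hj]; exact h2) (by rw [hi, hj]; exact h3)
  rw [hi, hj] at hc
  have h4 : u.val = 2 ∨ u.val = 3 ∨ u.val = 6 ∨ u.val = 7 ∨ u.val = 8 := by unfold classN at hc; omega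
  rcases h4 with h|h|h|h|h
  · obtain rfl : u = gv m 2 (by decide) := Fin.ext h
    exact Reachable.refl _
  · obtain rfl : u = gv m 3 (by decide) := Fin.ext h
    exact ((A 3 7 (by decide) (by decide) (by decide) (by decide) (by decide)).reachable).trans (A 7 2 (by decide) (by decide) (by decide) (by decide) (by decide)).reachable
  · obtain rfl : u = gv m 6 (by decide) := Fin.ext h
    exact (((A 6 3 (by decide) (by decide) (by decide) (by decide) (by decide)).reachable).trans (A 3 7 (by decide) (by decide) (by decide) (by decide) (by decide)).reachable).trans (A 7 2 (by decide) (by decide) (by decide) (by decide) (by decide)).reachable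
  · obtain rfl : u = gv m 7 (by decide) := Fin.ext h
    exact (A 7 2 (by decide) (by decide) (by decide) (by decide) (by decide)).reachable
  · obtain rfl : u = gv m 8 (by decide) := Fin.ext h
    exact (A 8 2 (by decide) (by decide) (by decide) (by decide) (by decide)).reachable

/-- pair (2,3): root 4 -/
lemma reach23 (hi : i.val = 2) (hj : j.val = 3) (u : Fin (m + 13)) (h9 : u.val < 9)
    (hc : classN u.val = i.val ∨ classN u.val = j.val) :
    (kempeSubgraph (Gk m) (phiF m) i j).Reachable u (gv m 4 (by decide)) := by
  have A : ∀ a b (ha : a < 9) (hb : b < 9), gadN a b → (classN a = 2 ∨ classN a = 3) →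
      (classN b = 2 ∨ classN b = 3) →
      (kempeSubgraph (Gk m) (phiF m) i j).Adj (gv m a ha) (gv m b hb) :=
    fun a b ha hb h1 h2 h3 =>
      kadjg m i j a b ha hb h1 (by rw [hi, hj]; exact h2) (by rw [hi, hj]; exact h3)
  rw [hi, hj] at hc
  have h4 : u.val = 4 ∨ u.val = 5 ∨ u.val = 6 ∨ u.val = 7 ∨ u.val = 8 := by unfold classN at hc; omega
  rcases h4 with h|h|h|h|h
  · obtain rfl : u = gv m 4 (by decide) := Fin.ext h
    exact Reachable.refl _
  · obtain rfl : u = gv m 5 (by decide) := Fin.ext h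
    exact ((A 5 6 (by decide) (by decide) (by decide) (by decide) (by decide)).reachable).trans (A 6 4 (by decide) (by decide) (by decide) (by decide) (by decide)).reachable
  · obtain rfl : u = gv m 6 (by decide) := Fin.ext h
    exact (A 6 4 (by decide) (by decide) (by decide) (by decide) (by decide)).reachable
  · obtain rfl : u = gv m 7 (by decide) := Fin.ext h
    exact (((A 7 5 (by decide) (by decide) (by decide) (by decide) (by decide)).reachable).trans (A 5 6 (by decide) (by decide) (by decide) (by decide) (by decide)).reachable).trans (A 6 4 (by decide) (by decide) (by decide) (by decide) (by decide)).reachable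
  · obtain rfl : u = gv m 8 (by decide) := Fin.ext h
    exact (A 8 4 (by decide) (by decide) (by decide) (by decide) (by decide)).reachable


end PairLemmas

section Reach

variable {m : ℕ}

lemma val_mem_of_phi {i j : Fin (m + 8)} {u : Fin (m + 13)}
    (hu : phiF m u = i ∨ phiF m u = j) :
    (phiF m u).val = i.val ∨ (phiF m u).val = j.val :=
  hu.imp (congrArg Fin.val) (congrArg Fin.val)

lemma gadget_side {i j : Fin (m + 8)} {u : Fin (m + 13)} (hi : i.val < 4) (hj : j.val < 4)
    (hu : phiF m u = i ∨ phiF m u = j) :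
    u.val < 9 ∧ (classN u.val = i.val ∨ classN u.val = j.val) := by
  have h := val_mem_of_phi hu
  rw [phiF_val] at h
  by_cases h9 : u.val < 9
  · simp only [h9, if_true] at h; exact ⟨h9, h⟩
  · simp only [h9, if_false] at h; omega

/-- mixed case: `i` a gadget color, `j` a clique color -/
lemma reach_mixed (i j : Fin (m + 8)) (hi : i.val < 4) (hj : 4 ≤ j.val)
    (u v : Fin (m + 13))
    (hu : phiF m u = i ∨ phiF m u = j) (hv : phiF m v = i ∨ phiF m v = j) :
    (kempeSubgraph (Gk m) (phiF m) i j).Reachable u v := by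
  have hjlt : j.val < m + 8 := j.isLt
  set hub : Fin (m + 13) := ⟨j.val + 5, by omega⟩ with hhub
  have hphihub : phiF m hub = j := by
    apply Fin.ext
    rw [phiF_val]
    simp only [hhub]
    have : ¬ (j.val + 5 < 9) := by omega
    simp [this]
  have key : ∀ x, (phiF m x = i ∨ phiF m x = j) →
      (kempeSubgraph (Gk m) (phiF m) i j).Reachable x hub := by
    intro x hx
    rcases hx with hx | hx
    · -- x is a gadget vertex
      have hx9 : x.val < 9 := by
        by_contra h9
        have := congrArg Fin.val hx
        rw [phiF_val] at this
        simp only [h9, if_false] at this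
        omega
      refine Adj.reachable ?_
      refine ⟨⟨?_, ?_⟩, Or.inl hx, Or.inr hphihub⟩
      · show x.val ≠ hub.val
        simp only [hhub]; omega
      · intro _ h2
        exfalso
        have : hub.val = j.val + 5 := rfl
        omega
    · -- x is the clique vertex of color j
      have hx9 : ¬ (x.val < 9) := by
        by_contra h9
        have := congrArg Fin.val hx
        rw [phiF_val] at this
        simp only [h9, if_true] at this
        have := classN_lt x.val
        omega
      have : x = hub := by
        apply Fin.ext
        have := congrArg Fin.val hx
        rw [phiF_val] at this
        simp only [hx9, if_false] at this
        show x.val = j.val + 5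
        omega
      rw [this]
  exact (key u hu).trans (key v hv).symm

/-- both clique colors -/
lemma reach_clique (i j : Fin (m + 8)) (hi : 4 ≤ i.val) (hj : 4 ≤ j.val)
    (u v : Fin (m + 13))
    (hu : phiF m u = i ∨ phiF m u = j) (hv : phiF m v = i ∨ phiF m v = j) :
    (kempeSubgraph (Gk m) (phiF m) i j).Reachable u v := by
  have hval : ∀ x, (phiF m x = i ∨ phiF m x = j) → x.val = i.val + 5 ∨ x.val = j.val + 5 := by
    intro x hx
    have h := val_mem_of_phi hx
    rw [phiF_val] at h
    by_cases h9 : x.val < 9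
    · simp only [h9, if_true] at h
      have := classN_lt x.val
      omega
    · simp only [h9, if_false] at h
      omega
  by_cases huv : u = v
  · rw [huv]
  · refine Adj.reachable ⟨⟨fun h => huv (Fin.ext h), fun h1 _ => absurd h1 ?_⟩, hu, hv⟩
    have := hval u hu
    omega

/-- both gadget colors, `i.val < j.val` -/
lemma reach_gadget (i j : Fin (m + 8)) (hij : i.val < j.val) (hj : j.val < 4)
    (u v : Fin (m + 13))
    (hu : phiF m u = i ∨ phiF m u = j) (hv : phiF m v = i ∨ phiF m v = j) :
    (kempeSubgraph (Gk m) (phiF m) i j).Reachable u v := by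
  obtain ⟨hu9, hcu⟩ := gadget_side (by omega) hj hu
  obtain ⟨hv9, hcv⟩ := gadget_side (by omega) hj hv
  have hcase : (i.val = 0 ∧ j.val = 1) ∨ (i.val = 0 ∧ j.val = 2) ∨ (i.val = 0 ∧ j.val = 3) ∨
      (i.val = 1 ∧ j.val = 2) ∨ (i.val = 1 ∧ j.val = 3) ∨ (i.val = 2 ∧ j.val = 3) := by omega
  rcases hcase with ⟨h1, h2⟩ | ⟨h1, h2⟩ | ⟨h1, h2⟩ | ⟨h1, h2⟩ | ⟨h1, h2⟩ | ⟨h1, h2⟩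
  · exact (reach01 h1 h2 u hu9 hcu).trans (reach01 h1 h2 v hv9 hcv).symm
  · exact (reach02 h1 h2 u hu9 hcu).trans (reach02 h1 h2 v hv9 hcv).symm
  · exact (reach03 h1 h2 u hu9 hcu).trans (reach03 h1 h2 v hv9 hcv).symm
  · exact (reach12 h1 h2 u hu9 hcu).trans (reach12 h1 h2 v hv9 hcv).symm
  · exact (reach13 h1 h2 u hu9 hcu).trans (reach13 h1 h2 v hv9 hcv).symm
  · exact (reach23 h1 h2 u hu9 hcu).trans (reach23 h1 h2 v hv9 hcv).symm

/-- Main reachability: any two vertices colored `i` or `j` are in the same Kempe chain. -/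
lemma reach (i j : Fin (m + 8)) (hij : i ≠ j) (u v : Fin (m + 13))
    (hu : phiF m u = i ∨ phiF m u = j) (hv : phiF m v = i ∨ phiF m v = j) :
    (kempeSubgraph (Gk m) (phiF m) i j).Reachable u v := by
  have hijv : i.val ≠ j.val := fun h => hij (Fin.ext h)
  by_cases hi : i.val < 4 <;> by_cases hj : j.val < 4
  · rcases Nat.lt_or_ge i.val j.val with h | h
    · exact reach_gadget i j h hj u v hu hv
    · rw [kempe_comm]
      exact reach_gadget j i (by omega) hi u v hu.symm hv.symm
  · exact reach_mixed i j hi (by omega) u v hu hv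
  · rw [kempe_comm]
    exact reach_mixed j i hj (by omega) u v hu.symm hv.symm
  · exact reach_clique i j (by omega) (by omega) u v hu hv

end Reach

/-! ### Kempe swap symmetry and invariant -/

lemma swap_mem_iff {k : ℕ} (i j x : Fin k) :
    (Equiv.swap i j x = i ∨ Equiv.swap i j x = j) ↔ (x = i ∨ x = j) := by
  rw [Equiv.swap_apply_eq_iff, Equiv.swap_apply_eq_iff, Equiv.swap_apply_left,
    Equiv.swap_apply_right]
  tauto

lemma isKempeSwap_symm {V : Type*} (G : SimpleGraph V) {k : ℕ}
    {c c' : G.Coloring (Fin k)} (h : IsKempeSwap G c c') : IsKempeSwap G c' c := by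
  obtain ⟨i, j, w, H⟩ := h
  have hmem : ∀ u, ((c' u = i ∨ c' u = j) ↔ (c u = i ∨ c u = j)) := by
    intro u
    obtain ⟨h1, h2⟩ := H u
    by_cases hr : (kempeSubgraph G (fun x => c x) i j).Reachable w u
    · rw [h1 hr]; exact swap_mem_iff i j (c u)
    · rw [h2 hr]
  have hgr : kempeSubgraph G (fun x => c' x) i j = kempeSubgraph G (fun x => c x) i j := by
    ext u v
    show G.Adj u v ∧ (c' u = i ∨ c' u = j) ∧ (c' v = i ∨ c' v = j) ↔
      G.Adj u v ∧ (c u = i ∨ c u = j) ∧ (c v = i ∨ c v = j)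
    rw [hmem u, hmem v]
  refine ⟨i, j, w, fun v => ?_⟩
  obtain ⟨h1, h2⟩ := H v
  rw [hgr]
  constructor
  · intro hr; rw [h1 hr]; exact (Equiv.swap_apply_self i j (c v)).symm
  · intro hr; rw [h2 hr]

section Invariant

variable {m : ℕ}

def Inv (c : (Gk m).Coloring (Fin (m + 8))) : Prop :=
  ∃ σ : Equiv.Perm (Fin (m + 8)), ∀ v, c v = σ (phiF m v)

lemma inv_swap {c c' : (Gk m).Coloring (Fin (m + 8))}
    (h : IsKempeSwap (Gk m) c c') : Inv c → Inv c' := by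
  rintro ⟨σ, hσ⟩
  obtain ⟨i, j, w, H⟩ := h
  by_cases hij : i = j
  · subst hij
    refine ⟨σ, fun v => ?_⟩
    obtain ⟨h1, h2⟩ := H v
    by_cases hr : (kempeSubgraph (Gk m) (fun x => c x) i i).Reachable w v
    · rw [h1 hr, Equiv.swap_self]; exact hσ v
    · rw [h2 hr]; exact hσ v
  · have hij' : σ.symm i ≠ σ.symm j := fun hh => hij (by simpa using congrArg σ hh)
    have hgr : kempeSubgraph (Gk m) (fun x => c x) i j
        = kempeSubgraph (Gk m) (phiF m) (σ.symm i) (σ.symm j) := by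
      have key : ∀ x : Fin (m + 13),
          (c x = i ∨ c x = j) ↔ (phiF m x = σ.symm i ∨ phiF m x = σ.symm j) := by
        intro x
        rw [hσ x, Equiv.apply_eq_iff_eq_symm_apply, Equiv.apply_eq_iff_eq_symm_apply]
      ext u v
      show (Gk m).Adj u v ∧ (c u = i ∨ c u = j) ∧ (c v = i ∨ c v = j) ↔
        (Gk m).Adj u v ∧ (phiF m u = σ.symm i ∨ phiF m u = σ.symm j) ∧
          (phiF m v = σ.symm i ∨ phiF m v = σ.symm j)
      rw [key u, key v]
    by_cases hw : phiF m w = σ.symm i ∨ phiF m w = σ.symm j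
    · refine ⟨σ.trans (Equiv.swap i j), fun v => ?_⟩
      obtain ⟨h1, h2⟩ := H v
      rw [hgr] at h1 h2
      by_cases hv : phiF m v = σ.symm i ∨ phiF m v = σ.symm j
      · rw [h1 (reach (σ.symm i) (σ.symm j) hij' w v hw hv), hσ v]
        rfl
      · have hnr : ¬ (kempeSubgraph (Gk m) (phiF m) (σ.symm i) (σ.symm j)).Reachable w v := by
          intro hr
          obtain ⟨p⟩ := hr
          exact hv (walk_colors p hw)
        rw [h2 hnr, hσ v]
        show σ (phiF m v) = (σ.trans (Equiv.swap i j)) (phiF m v)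
        rw [Equiv.trans_apply]
        refine (Equiv.swap_apply_of_ne_of_ne ?_ ?_).symm
        · intro hh; exact hv (Or.inl (by rw [← hh]; simp))
        · intro hh; exact hv (Or.inr (by rw [← hh]; simp))
    · have hiso : ∀ v, (kempeSubgraph (Gk m) (phiF m) (σ.symm i) (σ.symm j)).Reachable w v
          → v = w := by
        intro v hr
        obtain ⟨p⟩ := hr
        cases p with
        | nil => rfl
        | cons h _ => exact absurd h.2.1 hw
      refine ⟨σ, fun v => ?_⟩
      obtain ⟨h1, h2⟩ := H v
      rw [hgr] at h1 h2
      by_cases hr : (kempeSubgraph (Gk m) (phiF m) (σ.symm i) (σ.symm j)).Reachable w v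
      · obtain rfl : v = w := hiso v hr
        rw [h1 hr, hσ v]
        refine Eq.trans ?_ rfl
        show Equiv.swap i j (σ (phiF m v)) = σ (phiF m v)
        refine Equiv.swap_apply_of_ne_of_ne ?_ ?_
        · intro hh; exact hw (Or.inl (by rw [← hh]; simp))
        · intro hh; exact hw (Or.inr (by rw [← hh]; simp))
      · rw [h2 hr]; exact hσ v

lemma inv_of_equiv {a b : (Gk m).Coloring (Fin (m + 8))}
    (h : KempeEquiv (Gk m) (m + 8) a b) : Inv a ↔ Inv b := by
  have h' : Relation.EqvGen (IsKempeSwap (Gk m)) a b := h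
  clear h
  induction h' with
  | rel x y hxy => exact ⟨inv_swap hxy, inv_swap (isKempeSwap_symm _ hxy)⟩
  | refl x => exact Iff.rfl
  | symm x y _ ih => exact ih.symm
  | trans x y z _ _ ih1 ih2 => exact ih1.trans ih2

lemma inv_phi : Inv (phi m) := ⟨Equiv.refl _, fun _ => rfl⟩

lemma not_inv_psi' : ¬ Inv (psi' m) := by
  rintro ⟨σ, hσ⟩
  obtain ⟨u, hu⟩ := phiF_surj m (σ.symm ⟨m + 7, by omega⟩)
  have h1 := hσ u
  rw [hu] at h1
  simp only [Equiv.apply_symm_apply] at h1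
  have h2 := psiF'_val_lt m u
  have h3 : (psiF' m u).val = m + 7 := congrArg Fin.val h1
  omega

end Invariant

/-! ### At least two Kempe classes -/

lemma eqvGen_collapse {m : ℕ} {a b : (Gk m).Coloring (Fin (m + 8))}
    (h : Relation.EqvGen (KempeEquiv (Gk m) (m + 8)) a b) :
    KempeEquiv (Gk m) (m + 8) a b := by
  induction h with
  | rel x y hxy => exact hxy
  | refl x => exact Relation.EqvGen.refl x
  | symm x y _ ih => exact Relation.EqvGen.symm x y ih
  | trans x y z _ _ ih1 ih2 => exact Relation.EqvGen.trans x y z ih1 ih2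

lemma kc_ge (m : ℕ) : 2 ≤ Kc (Gk m) (m + 8) := by
  haveI : Finite ((Gk m).Coloring (Fin (m + 8))) :=
    Finite.of_injective (fun c => (c : Fin (m + 13) → Fin (m + 8))) DFunLike.coe_injective
  have hne : Quot.mk (KempeEquiv (Gk m) (m + 8)) (phi m)
      ≠ Quot.mk (KempeEquiv (Gk m) (m + 8)) (psi' m) := by
    intro h
    have h2 := Quot.eq.mp h
    have h3 := eqvGen_collapse h2
    exact not_inv_psi' ((inv_of_equiv h3).mp inv_phi)
  exact Finite.one_lt_card_iff_nontrivial.mpr ⟨_, _, hne⟩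

/-! ### Bipartite plus few edges -/

def side (m : ℕ) (u : Fin (m + 13)) : Bool := decide (u.val = 0 ∨ 9 ≤ u.val)

def ESet (m : ℕ) : Finset (Sym2 (Fin (m + 13))) :=
  (Gk m).edgeFinset.filter (fun e => (Sym2.map (side m) e).IsDiag)

lemma ESet_subset (m : ℕ) : ↑(ESet m) ⊆ (Gk m).edgeSet := by
  intro e he
  have := Finset.mem_coe.mp he
  exact SimpleGraph.mem_edgeFinset.mp (Finset.mem_of_mem_filter e this)

lemma bip (m : ℕ) : ((Gk m).deleteEdges ↑(ESet m)).Colorable 2 := by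
  refine ⟨SimpleGraph.Coloring.mk (fun v => if side m v then 0 else 1) ?_⟩
  intro u v hadj hc
  rw [SimpleGraph.deleteEdges_adj] at hadj
  obtain ⟨hG, hne⟩ := hadj
  apply hne
  have hside : side m u = side m v := by
    by_cases h1 : side m u <;> by_cases h2 : side m v <;> simp_all
  refine Finset.mem_coe.mpr (Finset.mem_filter.mpr ⟨SimpleGraph.mem_edgeFinset.mpr hG, ?_⟩)
  rw [Sym2.map_pair_eq]
  exact Sym2.mk_isDiag_iff.mpr hside

def sideA (m : ℕ) : Finset (Fin (m + 13)) :=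
  Finset.univ.filter (fun u => u.val = 0 ∨ 9 ≤ u.val)

lemma sideA_card (m : ℕ) : (sideA m).card = m + 5 := by
  apply Finset.card_eq_of_bijective
    (fun i hi => if i = 0 then ⟨0, by omega⟩ else ⟨i + 8, by omega⟩)
  · intro a ha
    have ha' := (Finset.mem_filter.mp ha).2
    rcases ha' with h | h
    · refine ⟨0, by omega, ?_⟩
      rw [if_pos rfl]
      exact Fin.ext h.symm
    · refine ⟨a.val - 8, by omega, ?_⟩
      have : ¬ (a.val - 8 = 0) := by omega
      simp only [this, if_false]
      apply Fin.ext; simp; omega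
  · intro i hi
    refine Finset.mem_filter.mpr ⟨Finset.mem_univ _, ?_⟩
    split <;> simp <;> omega
  · intro i j hi hj hij
    have hv := congrArg Fin.val hij
    by_cases h1 : i = 0 <;> by_cases h2 : j = 0 <;>
      simp only [h1, h2, if_true, if_false, Fin.val_mk] at hv <;> omega

/-- the gadget as a standalone 9-vertex graph -/
def G9 : SimpleGraph (Fin 9) where
  Adj a b := gadN a.val b.val
  symm := ⟨fun _ _ h => gadN_symm h⟩
  loopless := ⟨fun _ h => h.1 rfl⟩

instance : DecidableRel G9.Adj := fun a b => inferInstanceAs (Decidable (gadN a.val b.val))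

def F8 : Finset (Sym2 (Fin 9)) := G9.edgeFinset.filter (fun e => ¬ (0 : Fin 9) ∈ e)

lemma F8_card : F8.card = 16 := by decide

def emb (m : ℕ) : Fin 9 → Fin (m + 13) := fun a => ⟨a.val, by omega⟩

def FB (m : ℕ) : Finset (Sym2 (Fin (m + 13))) := F8.image (Sym2.map (emb m))

lemma ESet_card (m : ℕ) : (ESet m).card < Nat.choose (m + 8) 2 := by
  classical
  set D : Finset (Sym2 (Fin (m + 13))) := (sideA m).image (fun a => s(a, a)) with hD
  have hdisj : Disjoint (ESet m) D := by
    rw [Finset.disjoint_left]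
    intro e he hd
    have hnd : ¬ e.IsDiag := SimpleGraph.not_isDiag_of_mem_edgeSet _ (ESet_subset m he)
    obtain ⟨a, _, rfl⟩ := Finset.mem_image.mp hd
    exact hnd (Sym2.mk_isDiag_iff.mpr rfl)
  have hDcard : D.card = m + 5 := by
    rw [hD, Finset.card_image_of_injective _ ?_, sideA_card]
    intro a b hab
    have := Sym2.eq_iff.mp hab
    tauto
  have key : ∀ u v : Fin (m + 13), s(u, v) ∈ ESet m → s(u, v) ∈ (sideA m).sym2 ∪ FB m := by
    intro u v h
    obtain ⟨hE, hDg⟩ := Finset.mem_filter.mp h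
    have hG : (Gk m).Adj u v := SimpleGraph.mem_edgeFinset.mp hE
    rw [Sym2.map_pair_eq] at hDg
    have hside : side m u = side m v := Sym2.mk_isDiag_iff.mp hDg
    by_cases hs : side m u = true
    · refine Finset.mem_union_left _ (Finset.mk_mem_sym2_iff.mpr ⟨?_, ?_⟩)
      · exact Finset.mem_filter.mpr ⟨Finset.mem_univ _, of_decide_eq_true hs⟩
      · exact Finset.mem_filter.mpr ⟨Finset.mem_univ _,
          of_decide_eq_true (by show side m v = true; rw [← hside]; exact hs)⟩
    · have hsu : ¬ (u.val = 0 ∨ 9 ≤ u.val) := by simpa [side] using hs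
      have hsv : ¬ (v.val = 0 ∨ 9 ≤ v.val) := by
        have h2 : side m v ≠ true := by rw [← hside]; exact hs
        simpa [side] using h2
      have hu9 : u.val < 9 := by omega
      have hv9 : v.val < 9 := by omega
      refine Finset.mem_union_right _ (Finset.mem_image.mpr
        ⟨s(⟨u.val, hu9⟩, ⟨v.val, hv9⟩), ?_, ?_⟩)
      · refine Finset.mem_filter.mpr ⟨SimpleGraph.mem_edgeFinset.mpr ?_, ?_⟩
        · exact hG
        · rw [Sym2.mem_iff]
          rintro (h0 | h0) <;> (have := congrArg Fin.val h0; simp at this; omega)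
      · rw [Sym2.map_pair_eq]
        congr 1 <;> apply Fin.ext <;> rfl
  have hsub : ESet m ∪ D ⊆ (sideA m).sym2 ∪ FB m := by
    intro e he
    rcases Finset.mem_union.mp he with he | he
    · induction e using Sym2.ind with
      | _ u v => exact key u v he
    · obtain ⟨a, ha, rfl⟩ := Finset.mem_image.mp he
      exact Finset.mem_union_left _ (Finset.mk_mem_sym2_iff.mpr ⟨ha, ha⟩)
  have hcard : (ESet m).card + (m + 5) ≤ (m + 6).choose 2 + 16 := by
    have h1 : (ESet m ∪ D).card = (ESet m).card + D.card :=
      Finset.card_union_of_disjoint hdisj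
    have h2 : (ESet m ∪ D).card ≤ ((sideA m).sym2 ∪ FB m).card :=
      Finset.card_le_card hsub
    have h3 : ((sideA m).sym2 ∪ FB m).card ≤ (sideA m).sym2.card + (FB m).card :=
      Finset.card_union_le _ _
    have h4 : (sideA m).sym2.card = (m + 6).choose 2 := by
      rw [Finset.card_sym2, sideA_card]
    have h5 : (FB m).card ≤ 16 := le_of_le_of_eq (Finset.card_image_le) F8_card
    omega
  have e1 : (m + 6).choose 2 * 2 = (m + 6) * (m + 5) := by
    rw [Nat.choose_two_right, show m + 6 - 1 = m + 5 from by omega, Nat.div_mul_cancel]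
    have : Even ((m + 5) * (m + 6)) := Nat.even_mul_succ_self (m + 5)
    rw [Nat.mul_comm]
    exact this.two_dvd
  have e2 : (m + 8).choose 2 * 2 = (m + 8) * (m + 7) := by
    rw [Nat.choose_two_right, show m + 8 - 1 = m + 7 from by omega, Nat.div_mul_cancel]
    have : Even ((m + 7) * (m + 8)) := Nat.even_mul_succ_self (m + 7)
    rw [Nat.mul_comm]
    exact this.two_dvd
  have e3 : (m + 8) * (m + 7) = (m + 6) * (m + 5) + 4 * m + 26 := by ring
  omega

end KCex

/-- For every `k ≥ 8` there is a `(k-1)`-colorable graph obtained from a bipartite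
graph by adding fewer than `C(k,2)` edges with at least two Kempe equivalence
classes of `k`-colorings. -/
theorem stmt0 (k : ℕ) (hk : 8 ≤ k) :
    ∃ (n : ℕ) (G : SimpleGraph (Fin n)),
      G.Colorable (k - 1) ∧
      (∃ ℓ : ℕ, ℓ < Nat.choose k 2 ∧ BipartitePlus G ℓ) ∧
      2 ≤ Kc G k := by

  obtain ⟨m, rfl⟩ : ∃ m, k = m + 8 := ⟨k - 8, by omega⟩
  refine ⟨m + 13, KCex.Gk m, ?_, ?_, ?_⟩
  · have h : m + 8 - 1 = m + 7 := by omega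
    rw [h]
    exact ⟨KCex.psi m⟩
  · exact ⟨(KCex.ESet m).card, KCex.ESet_card m,
      KCex.ESet m, rfl, KCex.ESet_subset m, KCex.bip m⟩
  · exact KCex.kc_ge m
end

section
/- There exists a graph Ĥ on 9 vertices such that Kc(Ĥ, χ(Ĥ) + 1) ≥ 2, where χ(Ĥ) is the chromatic number of Ĥ. -/
open SimpleGraph

/-! ### Auxiliary definitions -/

/-- Edge list of the example graph. -/
def hatL : List (ℕ × ℕ) :=
  [(0,3),(0,6),(0,7),(0,8),(1,3),(1,4),(1,5),(1,7),(2,4),(2,5),(2,6),(2,8),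
   (3,5),(3,6),(3,8),(4,6),(4,7),(4,8),(5,7),(5,8),(6,7)]

/-- The example graph on 9 vertices. -/
def Hhat : SimpleGraph (Fin 9) := SimpleGraph.fromRel (fun u v => (u.val, v.val) ∈ hatL)

instance : DecidableRel Hhat.Adj := fun u v =>
  decidable_of_iff _ (SimpleGraph.fromRel_adj _ u v).symm

instance kempeAdjDec {V : Type*} (G : SimpleGraph V) [DecidableRel G.Adj] {k : ℕ}
    (φ : V → Fin k) (i j : Fin k) : DecidableRel (kempeSubgraph G φ i j).Adj := fun u v => by
  change Decidable (G.Adj u v ∧ (φ u = i ∨ φ u = j) ∧ (φ v = i ∨ φ v = j))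
  infer_instance

/-- The frozen 4-coloring. -/
def hatφ : Fin 9 → Fin 4 := ![0,0,0,1,1,2,2,3,3]

/-- A proper 3-coloring (seen inside `Fin 4`). -/
def hatψ : Fin 9 → Fin 4 := ![0,1,2,2,0,0,1,2,1]

/-- A proper 3-coloring. -/
def hatψ₃ : Fin 9 → Fin 3 := ![0,1,2,2,0,0,1,2,1]

lemma hatφ_proper : ∀ v w : Fin 9, Hhat.Adj v w → hatφ v ≠ hatφ w := by decide

lemma hatψ_proper : ∀ v w : Fin 9, Hhat.Adj v w → hatψ v ≠ hatψ w := by decide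

lemma hatψ₃_proper : ∀ v w : Fin 9, Hhat.Adj v w → hatψ₃ v ≠ hatψ₃ w := by decide

def hatφc : Hhat.Coloring (Fin 4) :=
  SimpleGraph.Coloring.mk hatφ (fun h => hatφ_proper _ _ h)

def hatψc : Hhat.Coloring (Fin 4) :=
  SimpleGraph.Coloring.mk hatψ (fun h => hatψ_proper _ _ h)

/-! ### Generic lemmas on Kempe swaps -/

lemma kempe_comm {V : Type*} (G : SimpleGraph V) {k : ℕ} (φ : V → Fin k) (i j : Fin k) :
    kempeSubgraph G φ i j = kempeSubgraph G φ j i := by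
  ext u v
  constructor <;> rintro ⟨a, b, c⟩ <;> exact ⟨a, b.symm, c.symm⟩

lemma kempe_perm {V : Type*} (G : SimpleGraph V) {k : ℕ} (φ : V → Fin k)
    (σ : Equiv.Perm (Fin k)) (i j : Fin k) :
    kempeSubgraph G (fun v => σ (φ v)) i j = kempeSubgraph G φ (σ.symm i) (σ.symm j) := by
  ext u v
  show G.Adj u v ∧ _ ↔ G.Adj u v ∧ _
  simp only [Equiv.apply_eq_iff_eq_symm_apply]

/-- The Kempe subgraph is unchanged by the swap. -/
lemma kempe_swap_subgraph_eq {V : Type*} {G : SimpleGraph V} {k : ℕ}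
    {φ ψ : G.Coloring (Fin k)} {i j : Fin k} {w : V}
    (h : ∀ v : V,
      ((kempeSubgraph G (fun x => φ x) i j).Reachable w v → ψ v = Equiv.swap i j (φ v)) ∧
      (¬ (kempeSubgraph G (fun x => φ x) i j).Reachable w v → ψ v = φ v)) :
    kempeSubgraph G (fun x => ψ x) i j = kempeSubgraph G (fun x => φ x) i j := by
  have key : ∀ x : V, (ψ x = i ∨ ψ x = j) ↔ (φ x = i ∨ φ x = j) := by
    intro x
    by_cases hr : (kempeSubgraph G (fun x => φ x) i j).Reachable w x
    · rw [(h x).1 hr]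
      constructor
      · rintro (hx | hx)
        · right
          have := congrArg (Equiv.swap i j) hx
          rwa [Equiv.swap_apply_self, Equiv.swap_apply_left] at this
        · left
          have := congrArg (Equiv.swap i j) hx
          rwa [Equiv.swap_apply_self, Equiv.swap_apply_right] at this
      · rintro (hx | hx)
        · rw [hx, Equiv.swap_apply_left]; right; rfl
        · rw [hx, Equiv.swap_apply_right]; left; rfl
    · rw [(h x).2 hr]
  ext u v
  constructor <;> rintro ⟨a, b, c⟩
  · exact ⟨a, (key u).mp b, (key v).mp c⟩
  · exact ⟨a, (key u).mpr b, (key v).mpr c⟩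

lemma isKempeSwap_symm {V : Type*} {G : SimpleGraph V} {k : ℕ}
    {φ ψ : G.Coloring (Fin k)} (h : IsKempeSwap G φ ψ) : IsKempeSwap G ψ φ := by
  obtain ⟨i, j, w, h⟩ := h
  refine ⟨i, j, w, fun v => ?_⟩
  have hK := kempe_swap_subgraph_eq h
  constructor
  · intro hr
    rw [hK] at hr
    rw [(h v).1 hr, Equiv.swap_apply_self]
  · intro hr
    rw [hK] at hr
    exact ((h v).2 hr).symm

/-! ### Frozenness of `hatφ` -/

local notation "K" i j => kempeSubgraph Hhat hatφ i j

lemma hub01 : ∀ v : Fin 9, (hatφ v = 0 ∨ hatφ v = 1) →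
    (kempeSubgraph Hhat hatφ 0 1).Reachable 0 v := by
  have A : ∀ u v : Fin 9, (kempeSubgraph Hhat hatφ 0 1).Adj u v →
      (kempeSubgraph Hhat hatφ 0 1).Reachable u v := fun _ _ h => h.reachable
  have r3 := A 0 3 (by decide)
  have r1 := r3.trans (A 1 3 (by decide)).symm
  have r4 := r1.trans (A 1 4 (by decide))
  have r2 := r4.trans (A 2 4 (by decide)).symm
  intro v hv
  fin_cases v
  · exact Reachable.refl _
  · exact r1
  · exact r2
  · exact r3
  · exact r4
  all_goals exact absurd hv (by decide)

lemma hub02 : ∀ v : Fin 9, (hatφ v = 0 ∨ hatφ v = 2) →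
    (kempeSubgraph Hhat hatφ 0 2).Reachable 0 v := by
  have A : ∀ u v : Fin 9, (kempeSubgraph Hhat hatφ 0 2).Adj u v →
      (kempeSubgraph Hhat hatφ 0 2).Reachable u v := fun _ _ h => h.reachable
  have r6 := A 0 6 (by decide)
  have r2 := r6.trans (A 2 6 (by decide)).symm
  have r5 := r2.trans (A 2 5 (by decide))
  have r1 := r5.trans (A 1 5 (by decide)).symm
  intro v hv
  fin_cases v
  · exact Reachable.refl _
  · exact r1
  · exact r2
  · exact absurd hv (by decide)
  · exact absurd hv (by decide)
  · exact r5
  · exact r6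
  all_goals exact absurd hv (by decide)

lemma hub03 : ∀ v : Fin 9, (hatφ v = 0 ∨ hatφ v = 3) →
    (kempeSubgraph Hhat hatφ 0 3).Reachable 0 v := by
  have A : ∀ u v : Fin 9, (kempeSubgraph Hhat hatφ 0 3).Adj u v →
      (kempeSubgraph Hhat hatφ 0 3).Reachable u v := fun _ _ h => h.reachable
  have r7 := A 0 7 (by decide)
  have r8 := A 0 8 (by decide)
  have r1 := r7.trans (A 1 7 (by decide)).symm
  have r2 := r8.trans (A 2 8 (by decide)).symm
  intro v hv
  fin_cases v
  · exact Reachable.refl _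
  · exact r1
  · exact r2
  · exact absurd hv (by decide)
  · exact absurd hv (by decide)
  · exact absurd hv (by decide)
  · exact absurd hv (by decide)
  · exact r7
  · exact r8

lemma hub12 : ∀ v : Fin 9, (hatφ v = 1 ∨ hatφ v = 2) →
    (kempeSubgraph Hhat hatφ 1 2).Reachable 3 v := by
  have A : ∀ u v : Fin 9, (kempeSubgraph Hhat hatφ 1 2).Adj u v →
      (kempeSubgraph Hhat hatφ 1 2).Reachable u v := fun _ _ h => h.reachable
  have r5 := A 3 5 (by decide)
  have r6 := A 3 6 (by decide)
  have r4 := r6.trans (A 4 6 (by decide)).symm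
  intro v hv
  fin_cases v
  · exact absurd hv (by decide)
  · exact absurd hv (by decide)
  · exact absurd hv (by decide)
  · exact Reachable.refl _
  · exact r4
  · exact r5
  · exact r6
  all_goals exact absurd hv (by decide)

lemma hub13 : ∀ v : Fin 9, (hatφ v = 1 ∨ hatφ v = 3) →
    (kempeSubgraph Hhat hatφ 1 3).Reachable 3 v := by
  have A : ∀ u v : Fin 9, (kempeSubgraph Hhat hatφ 1 3).Adj u v →
      (kempeSubgraph Hhat hatφ 1 3).Reachable u v := fun _ _ h => h.reachable
  have r8 := A 3 8 (by decide)
  have r4 := r8.trans (A 4 8 (by decide)).symm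
  have r7 := r4.trans (A 4 7 (by decide))
  intro v hv
  fin_cases v
  · exact absurd hv (by decide)
  · exact absurd hv (by decide)
  · exact absurd hv (by decide)
  · exact Reachable.refl _
  · exact r4
  · exact absurd hv (by decide)
  · exact absurd hv (by decide)
  · exact r7
  · exact r8

lemma hub23 : ∀ v : Fin 9, (hatφ v = 2 ∨ hatφ v = 3) →
    (kempeSubgraph Hhat hatφ 2 3).Reachable 5 v := by
  have A : ∀ u v : Fin 9, (kempeSubgraph Hhat hatφ 2 3).Adj u v →
      (kempeSubgraph Hhat hatφ 2 3).Reachable u v := fun _ _ h => h.reachable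
  have r7 := A 5 7 (by decide)
  have r8 := A 5 8 (by decide)
  have r6 := r7.trans (A 6 7 (by decide)).symm
  intro v hv
  fin_cases v
  · exact absurd hv (by decide)
  · exact absurd hv (by decide)
  · exact absurd hv (by decide)
  · exact absurd hv (by decide)
  · exact absurd hv (by decide)
  · exact Reachable.refl _
  · exact r6
  · exact r7
  · exact r8

lemma hub_to_core {i j : Fin 4} (h : Fin 9)
    (hh : ∀ v, (hatφ v = i ∨ hatφ v = j) → (kempeSubgraph Hhat hatφ i j).Reachable h v) :
    ∀ w v : Fin 9, (hatφ w = i ∨ hatφ w = j) → (hatφ v = i ∨ hatφ v = j) →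
      (kempeSubgraph Hhat hatφ i j).Reachable w v :=
  fun w v hw hv => (hh w hw).symm.trans (hh v hv)

lemma hub_comm {i j : Fin 4} (h : Fin 9)
    (hh : ∀ v, (hatφ v = i ∨ hatφ v = j) → (kempeSubgraph Hhat hatφ i j).Reachable h v) :
    ∀ v, (hatφ v = j ∨ hatφ v = i) → (kempeSubgraph Hhat hatφ j i).Reachable h v := by
  intro v hv
  rw [kempe_comm]
  exact hh v hv.symm

lemma frozenCore (i j : Fin 4) (hij : i ≠ j) :
    ∀ w v : Fin 9, (hatφ w = i ∨ hatφ w = j) → (hatφ v = i ∨ hatφ v = j) →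
      (kempeSubgraph Hhat hatφ i j).Reachable w v := by
  fin_cases i <;> fin_cases j <;>
    first
      | exact absurd rfl hij
      | exact hub_to_core _ hub01
      | exact hub_to_core _ (hub_comm _ hub01)
      | exact hub_to_core _ hub02
      | exact hub_to_core _ (hub_comm _ hub02)
      | exact hub_to_core _ hub03
      | exact hub_to_core _ (hub_comm _ hub03)
      | exact hub_to_core _ hub12
      | exact hub_to_core _ (hub_comm _ hub12)
      | exact hub_to_core _ hub13
      | exact hub_to_core _ (hub_comm _ hub13)
      | exact hub_to_core _ hub23
      | exact hub_to_core _ (hub_comm _ hub23)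

/-! ### The orbit invariant -/

def InOrbit (ρ : Hhat.Coloring (Fin 4)) : Prop :=
  ∃ σ : Equiv.Perm (Fin 4), ∀ v, ρ v = σ (hatφ v)

lemma orbit_step {ρ ψ : Hhat.Coloring (Fin 4)} (hρ : InOrbit ρ)
    (h : IsKempeSwap Hhat ρ ψ) : InOrbit ψ := by
  obtain ⟨σ, hσ⟩ := hρ
  obtain ⟨i, j, w, h⟩ := h
  by_cases hij : i = j
  · subst hij
    refine ⟨σ, fun v => ?_⟩
    rw [← hσ v]
    by_cases hr : (kempeSubgraph Hhat (fun x => ρ x) i i).Reachable w v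
    · rw [(h v).1 hr, Equiv.swap_self, Equiv.refl_apply]
    · exact (h v).2 hr
  · have hfun : (fun x => ρ x) = fun x => σ (hatφ x) := funext hσ
    have hKeq : kempeSubgraph Hhat (fun x => ρ x) i j
        = kempeSubgraph Hhat hatφ (σ.symm i) (σ.symm j) := by
      rw [hfun, kempe_perm]
    have hij' : σ.symm i ≠ σ.symm j := fun e => hij (by simpa using congrArg σ e)
    have htr : ∀ x : Fin 9, (ρ x = i ∨ ρ x = j) ↔
        (hatφ x = σ.symm i ∨ hatφ x = σ.symm j) := by
      intro x
      rw [hσ x]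
      simp only [Equiv.apply_eq_iff_eq_symm_apply]
    by_cases hw : ρ w = i ∨ ρ w = j
    · have reach : ∀ v, (ρ v = i ∨ ρ v = j) →
          (kempeSubgraph Hhat (fun x => ρ x) i j).Reachable w v := by
        intro v hv
        rw [hKeq]
        exact frozenCore _ _ hij' w v ((htr w).mp hw) ((htr v).mp hv)
      refine ⟨σ.trans (Equiv.swap i j), fun v => ?_⟩
      show ψ v = Equiv.swap i j (σ (hatφ v))
      rw [← hσ v]
      by_cases hr : (kempeSubgraph Hhat (fun x => ρ x) i j).Reachable w v
      · exact (h v).1 hr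
      · have hv : ¬(ρ v = i ∨ ρ v = j) := fun hv => hr (reach v hv)
        push_neg at hv
        rw [(h v).2 hr, Equiv.swap_apply_of_ne_of_ne hv.1 hv.2]
    · refine ⟨σ, fun v => ?_⟩
      rw [← hσ v]
      by_cases hr : (kempeSubgraph Hhat (fun x => ρ x) i j).Reachable w v
      · have hvw : w = v := by
          obtain ⟨p⟩ := hr
          cases p with
          | nil => rfl
          | cons hadj q => exact absurd hadj.2.1 hw
        subst hvw
        push_neg at hw
        rw [(h w).1 hr, Equiv.swap_apply_of_ne_of_ne hw.1 hw.2]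
      · exact (h v).2 hr

/-- There is a graph `Ĥ` on 9 vertices with `Kc(Ĥ, χ(Ĥ)+1) ≥ 2`. -/
theorem stmt3 :
    ∃ (H : SimpleGraph (Fin 9)) (n : ℕ),
      H.chromaticNumber = n ∧ 2 ≤ Kc H (n + 1) := by
  refine ⟨Hhat, 3, ?_, ?_⟩
  · -- chromatic number is 3
    have hcol : Hhat.Colorable 3 :=
      ⟨SimpleGraph.Coloring.mk hatψ₃ (fun h => hatψ₃_proper _ _ h)⟩
    have h2 : ¬ Hhat.Colorable 2 := by
      rintro ⟨c⟩
      have ha := c.valid (show Hhat.Adj 0 3 by decide)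
      have hb := c.valid (show Hhat.Adj 0 6 by decide)
      have hc := c.valid (show Hhat.Adj 3 6 by decide)
      have key : ∀ a b c : Fin 2, a ≠ b → a ≠ c → b ≠ c → False := by decide
      exact key _ _ _ ha hb hc
    refine le_antisymm hcol.chromaticNumber_le ?_
    have hlt : (2 : ℕ∞) < Hhat.chromaticNumber := by
      by_contra hle
      rw [not_lt] at hle
      exact h2 (chromaticNumber_le_iff_colorable.mp (by exact_mod_cast hle))
    have h3 : ((2 : ℕ∞) + 1) ≤ Hhat.chromaticNumber := Order.add_one_le_of_lt hlt
    calc ((3 : ℕ) : ℕ∞) = (2 : ℕ∞) + 1 := by norm_num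
      _ ≤ Hhat.chromaticNumber := h3
  · -- at least two Kempe classes
    have hinv : ∀ a b : Hhat.Coloring (Fin 4), KempeEquiv Hhat 4 a b →
        (InOrbit a ↔ InOrbit b) := by
      intro a b h
      induction h with
      | rel x y hxy =>
          exact ⟨fun hx => orbit_step hx hxy, fun hy => orbit_step hy (isKempeSwap_symm hxy)⟩
      | refl x => exact Iff.rfl
      | symm x y _ ih => exact ih.symm
      | trans x y z _ _ ih1 ih2 => exact ih1.trans ih2
    have hne : ¬ KempeEquiv Hhat 4 hatφc hatψc := by
      intro h
      have hφ : InOrbit hatφc := ⟨Equiv.refl _, fun v => rfl⟩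
      obtain ⟨σ, hσ⟩ := (hinv _ _ h).mp hφ
      have h05 : σ (hatφ 0) = σ (hatφ 5) := by
        have e0 := hσ 0
        have e5 := hσ 5
        have : hatψc 0 = hatψc 5 := by decide
        rw [this] at e0
        exact e0.symm.trans e5
      exact absurd (σ.injective h05) (by decide)
    have hfin : Finite (Hhat.Coloring (Fin 4)) :=
      Finite.of_injective (fun c => (c : Fin 9 → Fin 4)) DFunLike.coe_injective
    have hnt : Nontrivial (Quot (KempeEquiv Hhat 4)) := by
      refine ⟨Quot.mk _ hatφc, Quot.mk _ hatψc, fun h => hne ?_⟩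
      have h' := Quot.eqvGen_exact h
      exact ((Relation.EqvGen.is_equivalence _).eqvGen_iff).mp h'
    have : (3 : ℕ) + 1 = 4 := rfl
    rw [this]
    exact Finite.one_lt_card_iff_nontrivial.mpr hnt
end
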